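/- Let $G$ be a finite simple graph, $w$ a vertex of $G$, and $x, y$ two distinct non-adjacent vertices of $G$ both adjacent to $w$, such that $x$ and $y$ have exactly the same neighborhoods in a set $Q \subseteq V(G)$ containing $w$ but not containing $x$ or $y$. Then in the pivoted graph $G \wedge yw$, the vertex $x$ has no neighbors in $Q$ except $y$; that is, $N_{G \wedge yw}(x) \cap (Q \cup \{y\}) = \{y\}$. -/

import Mathlib

set_option maxHeartbeats 1600000

open scoped Classical

/-- Local complementation at a vertex `v`. -/
def localComp {V : Type*} (G : SimpleGraph V) (v : V) : SimpleGraph V where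
  Adj x y := x ≠ y ∧ Xor' (G.Adj x y) (G.Adj v x ∧ G.Adj v y)
  symm := by
    constructor
    intro x y ⟨hne, h⟩
    refine ⟨hne.symm, ?_⟩
    have h1 := G.adj_comm x y
    unfold Xor' at *
    rw [← h1, and_comm]
    exact h
  loopless := ⟨fun x h => h.1 rfl⟩

/-- Pivoting an edge `uv`: `G ∧ uv = G * u * v * u`. -/
def pivot {V : Type*} (G : SimpleGraph V) (u v : V) : SimpleGraph V :=
  localComp (localComp (localComp G u) v) u

/-- If `x, y` are distinct non-adjacent vertices both adjacent to `w`, with the same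
neighborhoods in a set `Q` containing `w` but neither `x` nor `y`, then after pivoting
`yw` the only neighbor of `x` in `Q ∪ {y}` is `y`. -/
theorem pivot_unique_neighbor {V : Type*} [Fintype V] (G : SimpleGraph V)
    (w x y : V) (Q : Set V)
    (hxy : x ≠ y) (hnadj : ¬ G.Adj x y) (hxw : G.Adj x w) (hyw : G.Adj y w)
    (hwQ : w ∈ Q) (hxQ : x ∉ Q) (hyQ : y ∉ Q)
    (hsame : ∀ z ∈ Q, (G.Adj x z ↔ G.Adj y z)) :
    (pivot G y w).neighborSet x ∩ (Q ∪ {y}) = {y} := by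
  have hxw' := hxw.symm
  have hyw' := hyw.symm
  have hxwne : x ≠ w := hxw.ne
  have hywne : y ≠ w := hyw.ne
  have hwx : w ≠ x := hxwne.symm
  have hwy : w ≠ y := hywne.symm
  have hyx : y ≠ x := hxy.symm
  have hnadj' : ¬ G.Adj y x := fun h => hnadj h.symm
  have lx : ¬ G.Adj x x := G.loopless.irrefl x
  have ly : ¬ G.Adj y y := G.loopless.irrefl y
  have lw : ¬ G.Adj w w := G.loopless.irrefl w
  ext z
  simp only [Set.mem_inter_iff, SimpleGraph.mem_neighborSet, Set.mem_union,
    Set.mem_singleton_iff, pivot, localComp, Xor', Xor]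
  by_cases hz : z = y
  · subst hz
    have lz : ¬ G.Adj z z := G.loopless.irrefl z
    simp only [hxw, hxw', hyw, hyw', hnadj, hnadj', lz, hxy, hyx, hxwne, hywne, hwx, hwy,
      ne_eq, not_false_eq_true, true_and, and_true, not_true_eq_false, false_and, and_false,
      or_false, false_or, not_false_iff, iff_true, true_iff]
    tauto
  · have cxz : G.Adj x z ↔ G.Adj z x := G.adj_comm x z
    have cyz : G.Adj y z ↔ G.Adj z y := G.adj_comm y z
    have cwz : G.Adj w z ↔ G.Adj z w := G.adj_comm w z
    constructor
    · rintro ⟨hadj, hQ | rfl⟩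
      · exfalso
        have hs := hsame z hQ
        have hzx : z ≠ x := fun h => hxQ (h ▸ hQ)
        have hzy : z ≠ y := hz
        by_cases hzw : z = w
        · subst hzw
          simp only [hxw, hxw', hyw, hyw', hnadj, hnadj', lx, ly, lw, hxy, hyx, hxwne, hywne,
            hwx, hwy, ne_eq, not_false_eq_true, true_and, and_true,
            not_true_eq_false, false_and, and_false, or_false, false_or] at hadj
        · have hwz : w ≠ z := fun h => hzw h.symm
          simp only [hxw, hxw', hyw, hyw', hnadj, hnadj', lx, ly, lw, hxy, hyx, hxwne, hywne,
            hwx, hwy, hzx, hzy, hwz, G.loopless.irrefl z, ne_eq, not_false_eq_true, true_and, and_true,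
            not_true_eq_false, false_and, and_false, or_false, false_or] at hadj
          tauto
      · exact absurd rfl hz
    · intro h
      exact absurd h hz
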